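/- Let q be a power of a prime p, let L be a field that is an F_q-algebra carrying a multiplicative nonarchimedean absolute value |·| : L → ℝ, let n ≥ 1 and i ≥ 1 be integers, and let γ_1, …, γ_{i−1}, β ∈ L with |β| > 1 and |γ_j| < |β| for every j = 1, …, i−1. Then |∑_{(c_0, c_1, …, c_{i−1}) ∈ F_q^i} (c_0 + c_1γ_1 + ⋯ + c_{i−1}γ_{i−1} + β)^{1 − q^n}| ≤ |β|^{q^n (1 − q)}. -/

import Mathlib

open Polynomial Finset

section Aux

variable {L : Type*} [Field L] (v : AbsoluteValue L ℝ)

lemma nonarch_sum_le (hv : IsNonarchimedean v) {ι : Type*} (s : Finset ι) (f : ι → L) {B : ℝ}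
    (hB : 0 ≤ B) (h : ∀ i ∈ s, v (f i) ≤ B) : v (∑ i ∈ s, f i) ≤ B := by
  classical
  induction s using Finset.cons_induction with
  | empty => simpa using hB
  | cons a s ha ih =>
    rw [Finset.sum_cons]
    exact le_trans (hv _ _) (max_le (h a (Finset.mem_cons_self a s))
      (ih fun i hi => h i (Finset.mem_cons_of_mem hi)))

lemma nonarch_sum_lt (hv : IsNonarchimedean v) {ι : Type*} (s : Finset ι) (f : ι → L) {B : ℝ}
    (hB : 0 < B) (h : ∀ i ∈ s, v (f i) < B) : v (∑ i ∈ s, f i) < B := by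
  classical
  induction s using Finset.cons_induction with
  | empty => simpa using hB
  | cons a s ha ih =>
    rw [Finset.sum_cons]
    exact lt_of_le_of_lt (hv _ _) (max_lt (h a (Finset.mem_cons_self a s))
      (ih fun i hi => h i (Finset.mem_cons_of_mem hi)))

lemma nonarch_add_eq (hv : IsNonarchimedean v) {a b : L} (h : v b < v a) : v (a + b) = v a := by
  refine le_antisymm (le_trans (hv a b) (max_le le_rfl h.le)) ?_
  have key : v a ≤ max (v (a + b)) (v b) := by
    have h2 := hv (a + b) (-b)
    rw [add_neg_cancel_right] at h2
    simpa [v.map_neg] using h2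
  by_contra hlt
  push_neg at hlt
  exact absurd key (not_le.mpr (max_lt hlt h))

end Aux

lemma sum_inv_eq (Fq L : Type*) [Field Fq] [Fintype Fq] [Field L] [Algebra Fq L]
    (z : L) (hz : ∀ c : Fq, z - algebraMap Fq L c ≠ 0) :
    ∑ c : Fq, (z - algebraMap Fq L c)⁻¹ = -(z ^ Fintype.card Fq - z)⁻¹ := by
  classical
  have hq1 : 1 < Fintype.card Fq := Fintype.one_lt_card
  have hq0 : ((Fintype.card Fq : ℕ) : Fq) = 0 := by simp
  have hP : ∏ c : Fq, (X - C c) = (X ^ Fintype.card Fq - X : Fq[X]) := by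
    have hm : (X ^ Fintype.card Fq - X : Fq[X]).Monic :=
      monic_X_pow_sub (lt_of_le_of_lt degree_X_le (by exact_mod_cast hq1))
    have hroots := FiniteField.roots_X_pow_card_sub_X Fq
    have hdeg := FiniteField.X_pow_card_sub_X_natDegree_eq Fq hq1
    have h := prod_multiset_X_sub_C_of_monic_of_roots_card_eq hm
      (by rw [hroots, hdeg]; simp)
    rw [hroots] at h
    rw [Finset.prod_eq_multiset_prod]
    exact h
  have hD : ∑ c : Fq, ∏ c' ∈ Finset.univ.erase c, (X - C c') = (-1 : Fq[X]) := by
    have h1 := congrArg derivative hP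
    rw [Finset.prod_eq_multiset_prod, derivative_prod] at h1
    simp only [derivative_sub, derivative_X, derivative_C, sub_zero, mul_one,
      derivative_X_pow, hq0, map_zero, zero_mul, zero_sub] at h1
    calc ∑ c : Fq, ∏ c' ∈ Finset.univ.erase c, (X - C c')
        = (Finset.univ.val.map fun c : Fq =>
            ((Finset.univ.val.erase c).map fun c' : Fq => X - C c').prod).sum := by
          rw [Finset.sum_eq_multiset_sum]
          congr 1
      _ = -1 := h1
  have hA : ∑ c : Fq, ∏ c' ∈ Finset.univ.erase c, (z - algebraMap Fq L c') = (-1 : L) := by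
    have h := congrArg (aeval z) hD
    simpa [map_sum, map_prod] using h
  have hprod : ∏ c : Fq, (z - algebraMap Fq L c) = z ^ Fintype.card Fq - z := by
    have h := congrArg (aeval z) hP
    simpa [map_prod] using h
  have hne : (z ^ Fintype.card Fq - z) ≠ 0 := by
    rw [← hprod]; exact Finset.prod_ne_zero_iff.mpr fun c _ => hz c
  have key : ∀ c : Fq, (z - algebraMap Fq L c)⁻¹ =
      (∏ c' ∈ Finset.univ.erase c, (z - algebraMap Fq L c')) * (z ^ Fintype.card Fq - z)⁻¹ := by
    intro c
    have h2 : (z - algebraMap Fq L c) * ∏ c' ∈ Finset.univ.erase c, (z - algebraMap Fq L c')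
        = z ^ Fintype.card Fq - z :=
      (Finset.mul_prod_erase Finset.univ (fun c' => z - algebraMap Fq L c')
        (Finset.mem_univ c)).trans hprod
    rw [← div_eq_mul_inv, eq_div_iff hne, ← h2, ← mul_assoc, inv_mul_cancel₀ (hz c), one_mul]
  calc ∑ c : Fq, (z - algebraMap Fq L c)⁻¹
      = ∑ c : Fq, (∏ c' ∈ Finset.univ.erase c, (z - algebraMap Fq L c'))
          * (z ^ Fintype.card Fq - z)⁻¹ := Finset.sum_congr rfl fun c _ => key c
    _ = (∑ c : Fq, ∏ c' ∈ Finset.univ.erase c, (z - algebraMap Fq L c'))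
          * (z ^ Fintype.card Fq - z)⁻¹ := (Finset.sum_mul _ _ _).symm
    _ = -(z ^ Fintype.card Fq - z)⁻¹ := by rw [hA]; ring

/-- **Lemma 5.3(2).**  Let `q` be a power of a prime (realized as the cardinality of a finite
field `Fq`), `L` a field which is an `Fq`-algebra equipped with a multiplicative nonarchimedean
absolute value `v`, `n ≥ 1`, and `i = k + 1 ≥ 1`.  Let `γ_1, …, γ_k ∈ L` (here `γ : Fin k → L`)
and `β ∈ L` with `|β| > 1` and `|γ_j| < |β|` for all `j`.  Then
`|∑_{(c₀,c₁,…,c_k) ∈ Fq^{k+1}} (c₀ + c₁γ₁ + ⋯ + c_kγ_k + β)^{1 - q^n}| ≤ |β|^{q^n (1 - q)}`. -/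
theorem stmt2 (Fq L : Type*) [Field Fq] [Fintype Fq] [Field L] [Algebra Fq L]
    (q : ℕ) (hq : q = Fintype.card Fq)
    (v : AbsoluteValue L ℝ) (hv : IsNonarchimedean v)
    (n : ℕ) (hn : 1 ≤ n) (k : ℕ)
    (γ : Fin k → L) (β : L) (hβ : 1 < v β)
    (hγ : ∀ j : Fin k, v (γ j) < v β) :
    v (∑ c : Fq × (Fin k → Fq),
        (algebraMap Fq L c.1 + ∑ j : Fin k, algebraMap Fq L (c.2 j) * γ j + β)
          ^ (1 - (q : ℤ) ^ n)) ≤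
      v β ^ ((q : ℤ) ^ n * (1 - (q : ℤ))) := by
  classical
  have hq2 : 1 < q := hq ▸ Fintype.one_lt_card
  have hvβ0 : 0 < v β := lt_trans one_pos hβ
  -- characteristic facts
  set p := ringChar Fq with hpdef
  haveI hchar : CharP Fq p := ringChar.charP Fq
  obtain ⟨m, hp, hcard⟩ := FiniteField.card Fq p
  haveI : Fact p.Prime := ⟨hp⟩
  haveI : CharP L p := charP_of_injective_algebraMap (algebraMap Fq L).injective p
  -- absolute values of constants
  have hvc : ∀ c : Fq, v (algebraMap Fq L c) ≤ 1 := by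
    intro c
    rcases eq_or_ne c 0 with rfl | hc
    · simp
    · have hc1 : c ^ (q - 1) = 1 := by
        rw [hq]; exact FiniteField.pow_card_sub_one_eq_one c hc
      have h1 : v (algebraMap Fq L c) ^ (q - 1) = 1 := by
        rw [← map_pow, ← map_pow, hc1, map_one, map_one]
      by_contra hlt
      push_neg at hlt
      have h2 : (1 : ℝ) < v (algebraMap Fq L c) ^ (q - 1) :=
        one_lt_pow₀ hlt (by omega)
      rw [h1] at h2
      exact lt_irrefl _ h2
  set Q : ℕ := q ^ n with hQdef
  have hQ1 : 1 ≤ Q := Nat.one_le_pow _ _ (by omega)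
  have hQlt : Q < Q * q := lt_mul_iff_one_lt_right (by omega) |>.mpr hq2
  have hB0 : (0 : ℝ) < v β ^ ((q : ℤ) ^ n * (1 - (q : ℤ))) := zpow_pos hvβ0 _
  rw [Fintype.sum_prod_type_right]
  refine nonarch_sum_le v hv _ _ hB0.le ?_
  intro c₂ _
  simp only [add_assoc]
  set y : L := ∑ j : Fin k, algebraMap Fq L (c₂ j) * γ j + β with hydef
  have hvy : v y = v β := by
    have hS : v (∑ j : Fin k, algebraMap Fq L (c₂ j) * γ j) < v β := by
      refine nonarch_sum_lt v hv _ _ hvβ0 ?_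
      intro j _
      rw [v.map_mul]
      calc v (algebraMap Fq L (c₂ j)) * v (γ j) ≤ 1 * v (γ j) :=
            mul_le_mul_of_nonneg_right (hvc _) (v.nonneg _)
        _ = v (γ j) := one_mul _
        _ < v β := hγ j
    rw [hydef, add_comm]
    exact nonarch_add_eq v hv hS
  have hvy1 : 1 < v y := hvy ▸ hβ
  have hne1 : ∀ c : Fq, algebraMap Fq L c + y ≠ 0 := by
    intro c h0
    have hx : v (algebraMap Fq L c + y) = v y := by
      rw [add_comm]; exact nonarch_add_eq v hv (lt_of_le_of_lt (hvc c) hvy1)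
    rw [h0, map_zero] at hx
    exact absurd hx.symm (ne_of_gt (lt_trans one_pos hvy1))
  have hvyQ : v (y ^ Q) = v β ^ Q := by rw [map_pow, hvy]
  have hvyQ1 : 1 < v (y ^ Q) := by
    rw [hvyQ]; exact one_lt_pow₀ hβ (by omega)
  have hne2 : ∀ c : Fq, y ^ Q - algebraMap Fq L c ≠ 0 := by
    intro c h0
    have hx : v (y ^ Q + -(algebraMap Fq L c)) = v (y ^ Q) :=
      nonarch_add_eq v hv (by rw [v.map_neg]; exact lt_of_le_of_lt (hvc c) hvyQ1)
    rw [← sub_eq_add_neg, h0, map_zero] at hx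
    exact absurd hx.symm (ne_of_gt (lt_trans one_pos hvyQ1))
  -- Frobenius
  have hfrob : ∀ c : Fq, (algebraMap Fq L c + y) ^ Q = algebraMap Fq L c + y ^ Q := by
    intro c
    have hQp : Q = p ^ (m * n) := by rw [hQdef, hq, hcard, ← pow_mul]
    have hcQ : c ^ Q = c := by
      rw [hQdef, hq]; exact FiniteField.pow_card_pow n c
    rw [hQp, add_pow_char_pow, ← hQp, ← map_pow, hcQ]
  have hcast : ((1 : ℤ) - (q : ℤ) ^ n) = (1 : ℤ) - (Q : ℤ) := by
    rw [hQdef]; push_cast; ring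
  have hterm : ∀ c : Fq, (algebraMap Fq L c + y) ^ (1 - (q : ℤ) ^ n)
      = 1 + (y - y ^ Q) * (algebraMap Fq L c + y ^ Q)⁻¹ := by
    intro c
    have hx := hne1 c
    have hxQ : algebraMap Fq L c + y ^ Q ≠ 0 := by
      rw [← hfrob c]; exact pow_ne_zero _ hx
    rw [hcast, zpow_sub₀ hx, zpow_one, zpow_natCast, hfrob c]
    field_simp
    ring
  have hcast0 : ((Fintype.card Fq : ℕ) : L) = 0 := by
    have h0 : ((Fintype.card Fq : ℕ) : Fq) = 0 := by simp
    rw [← map_natCast (algebraMap Fq L), h0, map_zero]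
  have hreindex : ∑ c : Fq, (algebraMap Fq L c + y ^ Q)⁻¹
      = ∑ c : Fq, (y ^ Q - algebraMap Fq L c)⁻¹ := by
    refine Fintype.sum_equiv (Equiv.neg Fq) _ _ fun c => ?_
    simp [sub_neg_eq_add, add_comm]
  have hsum : ∑ c : Fq, (algebraMap Fq L c + y) ^ (1 - (q : ℤ) ^ n)
      = (y - y ^ Q) * (-((y ^ Q) ^ q - y ^ Q)⁻¹) := by
    have hc : ∑ c : Fq, (algebraMap Fq L c + y) ^ (1 - (q : ℤ) ^ n)
        = ∑ c : Fq, (1 + (y - y ^ Q) * (algebraMap Fq L c + y ^ Q)⁻¹) :=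
      Finset.sum_congr rfl fun c _ => hterm c
    rw [hc, Finset.sum_add_distrib, ← Finset.mul_sum, Finset.sum_const, Finset.card_univ,
      nsmul_eq_mul, mul_one, hcast0, zero_add, hreindex, sum_inv_eq Fq L (y ^ Q) hne2, hq]
  rw [hsum]
  -- bound the absolute value
  have hden : v ((y ^ Q) ^ q - y ^ Q) = v β ^ (Q * q) := by
    have h1 : v ((y ^ Q) ^ q) = v β ^ (Q * q) := by
      rw [map_pow, hvyQ, ← pow_mul]
    have h2 : v (y ^ Q) < v ((y ^ Q) ^ q) := by
      rw [h1, hvyQ]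
      exact pow_lt_pow_right₀ hβ hQlt
    rw [sub_eq_add_neg, nonarch_add_eq v hv (by rwa [v.map_neg]), h1]
  have hnum : v (y - y ^ Q) ≤ v β ^ Q := by
    rw [sub_eq_add_neg]
    refine le_trans (hv _ _) (max_le ?_ ?_)
    · rw [hvy]
      calc v β = v β ^ 1 := (pow_one _).symm
        _ ≤ v β ^ Q := pow_le_pow_right₀ hβ.le hQ1
    · rw [v.map_neg, hvyQ]
  have hrhs : v β ^ ((q : ℤ) ^ n * (1 - (q : ℤ))) = v β ^ Q * (v β ^ (Q * q))⁻¹ := by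
    have he : (q : ℤ) ^ n * (1 - (q : ℤ)) = (Q : ℤ) - ((Q * q : ℕ) : ℤ) := by
      rw [hQdef]; push_cast; ring
    rw [he, zpow_sub₀ (ne_of_gt hvβ0), zpow_natCast, zpow_natCast, div_eq_mul_inv]
  rw [hrhs, map_mul, v.map_neg, map_inv₀, hden]
  exact mul_le_mul_of_nonneg_right hnum (inv_nonneg.mpr (pow_nonneg hvβ0.le _))
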